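/- Let A ∈ GL₂(ℚ) with det A = 1. If A^n has integer entries for some n ≥ 1, then tr A is an integer. -/

import Mathlib

open Polynomial

private noncomputable def chebP : ℕ → Polynomial ℤ
  | 0 => 2
  | 1 => X
  | (k+2) => X * chebP (k+1) - chebP k

private lemma chebP_natDegree_le : ∀ k, (chebP k).natDegree ≤ k
  | 0 => by simp [chebP]
  | 1 => by simp [chebP]
  | (k+2) => by
      rw [chebP]
      refine (Polynomial.natDegree_sub_le _ _).trans ?_
      simp only [max_le_iff]
      constructor
      · refine (Polynomial.natDegree_mul_le).trans ?_
        have := chebP_natDegree_le (k+1)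
        rw [Polynomial.natDegree_X]
        omega
      · exact (chebP_natDegree_le k).trans (by omega)

private lemma chebP_monic : ∀ k, 1 ≤ k → (chebP k).Monic ∧ (chebP k).natDegree = k
  | 0 => by omega
  | 1 => fun _ => ⟨Polynomial.monic_X, Polynomial.natDegree_X⟩
  | (k+2) => by
      intro _
      obtain ⟨hm, hd⟩ := chebP_monic (k+1) (by omega)
      have hXm : (X * chebP (k+1)).Monic := Polynomial.monic_X.mul hm
      have hXd : (X * chebP (k+1)).natDegree = k+2 := by
        rw [Polynomial.natDegree_mul Polynomial.X_ne_zero hm.ne_zero,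
          Polynomial.natDegree_X, hd]
        omega
      have hdeg : (-(chebP k)).degree < (X * chebP (k+1)).degree := by
        rw [Polynomial.degree_neg, Polynomial.degree_eq_natDegree hXm.ne_zero, hXd]
        have h1 : (chebP k).degree ≤ (k : WithBot ℕ) :=
          Polynomial.degree_le_natDegree.trans (by exact_mod_cast chebP_natDegree_le k)
        exact h1.trans_lt (by exact_mod_cast (by omega : k < k+2))
      have : (X * chebP (k+1) + -(chebP k)).Monic := hXm.add_of_left hdeg
      rw [chebP]
      constructor
      · simpa [sub_eq_add_neg] using this
      · rw [sub_eq_add_neg,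
          Polynomial.natDegree_eq_of_degree_eq
            (Polynomial.degree_add_eq_left_of_degree_lt hdeg), hXd]

/-- Let `A ∈ GL₂(ℚ)` with `det A = 1`. If `A^n` has integer entries for some `n ≥ 1`,
then `tr A` is an integer. -/
theorem stmt2 (A : Matrix (Fin 2) (Fin 2) ℚ) (hdet : A.det = 1)
    (n : ℕ) (hn : 1 ≤ n) (hint : ∀ i j, ∃ z : ℤ, (A ^ n) i j = (z : ℚ)) :
    ∃ z : ℤ, A.trace = (z : ℚ) := by
  set t : ℚ := A.trace with ht
  -- Cayley-Hamilton for 2x2 with det 1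
  have hCH : A ^ 2 = t • A - 1 := by
    rw [Matrix.det_fin_two] at hdet
    have htr : t = A 0 0 + A 1 1 := by rw [ht, Matrix.trace_fin_two]
    ext i j
    fin_cases i <;> fin_cases j <;>
      simp [pow_two, Matrix.mul_apply, Fin.sum_univ_two, Matrix.sub_apply,
        Matrix.smul_apply, Matrix.one_apply, htr] <;> ring_nf <;> linarith [hdet]
  -- traces of powers
  have haeval : ∀ k, Polynomial.aeval t (chebP k) = (A ^ k).trace ∧
      Polynomial.aeval t (chebP (k+1)) = (A ^ (k+1)).trace := by
    intro k
    induction k with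
    | zero =>
      constructor
      · simp [chebP, Matrix.trace_fin_two, map_ofNat]
      · simp [chebP]; exact ht
    | succ k ih =>
      obtain ⟨h1, h2⟩ := ih
      refine ⟨h2, ?_⟩
      have hpow : A ^ (k+2) = t • A ^ (k+1) - A ^ k := by
        calc A ^ (k+2) = A ^ k * A ^ 2 := by rw [pow_add]
          _ = A ^ k * (t • A - 1) := by rw [hCH]
          _ = t • A ^ (k+1) - A ^ k := by
              rw [Matrix.mul_sub, Matrix.mul_smul, mul_one, ← pow_succ]
      rw [chebP]
      simp only [map_sub, map_mul, Polynomial.aeval_X, h1, h2, hpow,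
        Matrix.trace_sub, Matrix.trace_smul]
      simp [smul_eq_mul]
  -- tr(A^n) is an integer
  obtain ⟨a, ha⟩ := hint 0 0
  obtain ⟨b, hb⟩ := hint 1 1
  have htrn : (A ^ n).trace = ((a + b : ℤ) : ℚ) := by
    rw [Matrix.trace_fin_two, ha, hb]; push_cast; ring
  -- t is integral over ℤ
  obtain ⟨hm, hd⟩ := chebP_monic n hn
  have hint_t : IsIntegral ℤ t := by
    refine ⟨chebP n - C (a + b), ?_, ?_⟩
    · have hdeg : (-(C (a+b) : Polynomial ℤ)).degree < (chebP n).degree := by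
        rw [Polynomial.degree_neg, Polynomial.degree_eq_natDegree hm.ne_zero, hd]
        calc (C (a+b) : Polynomial ℤ).degree ≤ 0 := Polynomial.degree_C_le
          _ < ((n : ℕ) : WithBot ℕ) := by exact_mod_cast (by omega : 0 < n)
      simpa [sub_eq_add_neg] using hm.add_of_left hdeg
    · rw [Polynomial.eval₂_sub, ← Polynomial.aeval_def, (haeval n).1, htrn,
        Polynomial.eval₂_C]
      simp
  obtain ⟨z, hz⟩ := IsIntegrallyClosed.isIntegral_iff.mp hint_t
  exact ⟨z, by rw [← hz]; simp⟩
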